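/- Let R(M⃗_1, …, M⃗_k) be an R-cross-section of IS_n for a decomposition N_n = M_1 ⊔ … ⊔ M_k, and let R_1, …, R_k be R-cross-sections of IS_m. Let φ_μ be the map from the direct product ∏_{i=1}^k (R_i ≀_p R(M⃗_i)) to IS_m ≀_p IS_n sending a tuple ((f_1,a_1),…,(f_k,a_k)) to the element (f,a) with a|_{M_i} = a_i and f|_{M_i} = f_i for each i. Then the image R = φ_μ(∏_{i=1}^k (R_i ≀_p R(M⃗_i))) is an R-cross-section of IS_m ≀_p IS_n. -/

import Mathlib

open scoped Classical

/-- `IS n` is the full inverse symmetric semigroup: all partial bijections of `Fin n`;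
multiplication is composition of partial maps (maps acting on the right). -/
abbrev IS (n : ℕ) : Type := PEquiv (Fin n) (Fin n)

noncomputable section
namespace ISW

instance {n : ℕ} : Mul (IS n) := ⟨PEquiv.trans⟩
instance {n : ℕ} : One (IS n) := ⟨PEquiv.refl _⟩

/-- The domain of a partial bijection. -/
def pdom {n : ℕ} (f : IS n) : Set (Fin n) := {x | (f x).isSome}

/-- The range of a partial bijection. -/
def pran {n : ℕ} (f : IS n) : Set (Fin n) := {y | (f.symm y).isSome}

/-- Green's R-relation on a semigroup (with identity): `u R v` iff `uS = vS`. -/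
def GreenR {S : Type*} [Mul S] (u v : S) : Prop :=
  {w | ∃ s, w = u * s} = {w | ∃ s, w = v * s}

/-- Green's L-relation on a semigroup (with identity): `u L v` iff `Su = Sv`. -/
def GreenL {S : Type*} [Mul S] (u v : S) : Prop :=
  {w | ∃ s, w = s * u} = {w | ∃ s, w = s * v}

/-- An R-cross-section: a subsemigroup containing exactly one element of every
Green R-class. -/
def IsRCrossSection {S : Type*} [Mul S] (T : Set S) : Prop :=
  (∀ a ∈ T, ∀ b ∈ T, a * b ∈ T) ∧ ∀ x : S, ∃! t, t ∈ T ∧ GreenR x t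

/-- An L-cross-section: a subsemigroup containing exactly one element of every
Green L-class. -/
def IsLCrossSection {S : Type*} [Mul S] (T : Set S) : Prop :=
  (∀ a ∈ T, ∀ b ∈ T, a * b ∈ T) ∧ ∀ x : S, ∃! t, t ∈ T ∧ GreenL x t

/-- `φ` realizes a semigroup isomorphism from `T₁` onto `T₂`. -/
def IsSemiIso {S₁ S₂ : Type*} [Mul S₁] [Mul S₂] (T₁ : Set S₁) (T₂ : Set S₂)
    (φ : S₁ → S₂) : Prop :=
  Set.BijOn φ T₁ T₂ ∧ ∀ a ∈ T₁, ∀ b ∈ T₁, φ (a * b) = φ a * φ b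

/-- The partial wreath product `IS m ≀_p IS n`: pairs `(f, a)` with `a ∈ IS n` and
`f` a partial map from `Fin n` to `IS m` whose domain equals the domain of `a`. -/
structure PW (m n : ℕ) where
  base : IS n
  fib : Fin n → Option (IS m)
  dom_eq : ∀ x, (fib x).isSome ↔ (base x).isSome

/-- Multiplication of the partial wreath product: `(f,a)·(g,b) = (f g^a, ab)`. -/
instance {m n : ℕ} : Mul (PW m n) where
  mul u v :=
    { base := u.base * v.base
      fib := fun x => Option.map₂ (· * ·) (u.fib x) ((u.base x).bind v.fib)
      dom_eq := by
        intro x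
        show _ ↔ (((u.base x).bind v.base)).isSome
        cases h : u.base x with
        | none =>
          have : u.fib x = none := by
            have := (u.dom_eq x)
            simp [h] at this
            simpa using Option.not_isSome_iff_eq_none.mp (by simp [this])
          simp [h, this, Option.map₂]
        | some y =>
          have hf : (u.fib x).isSome := (u.dom_eq x).mpr (by simp [h])
          obtain ⟨s, hs⟩ := Option.isSome_iff_exists.mp hf
          cases h2 : v.base y with
          | none =>
            have : v.fib y = none := by
              have := (v.dom_eq y)
              simp [h2] at this
              simpa using Option.not_isSome_iff_eq_none.mp (by simp [this])
            simp [h, h2, hs, this, Option.map₂]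
          | some z =>
            have hg : (v.fib y).isSome := (v.dom_eq y).mpr (by simp [h2])
            obtain ⟨t, ht⟩ := Option.isSome_iff_exists.mp hg
            simp [h, h2, hs, ht, Option.map₂] }

/-- The identity of the partial wreath product. -/
instance {m n : ℕ} : One (PW m n) where
  one :=
    { base := 1
      fib := fun _ => some 1
      dom_eq := by intro x; simp; rfl }

/-- `chainFun L j x`: with `L` listing the elements of a block in increasing order and
`0 ≤ j < |L|` (`j` is the 0-based version of the paper's index), this is the value at `x` of
the chain `a_{i,j}`: the partial bijection with domain everything except `L[j]`,
sending `L[l] ↦ L[l+1]` for `l < j` and fixing all other points. -/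
def chainFun {n : ℕ} (L : List (Fin n)) (j : ℕ) (x : Fin n) : Option (Fin n) :=
  if x ∈ L then
    if L.idxOf x = j then none
    else if L.idxOf x < j then L[L.idxOf x + 1]?
    else some x
  else some x

/-- The generators `a_{i,j}` attached to an ordered decomposition with blocks `B i`. -/
def RGens {n s : ℕ} (B : Fin s → List (Fin n)) : Set (IS n) :=
  {a : IS n | ∃ i : Fin s, ∃ j : ℕ, j < (B i).length ∧ ∀ x, a x = chainFun (B i) j x}

/-- `R(M⃗₁, …, M⃗ₛ)`: the subsemigroup of `IS n` generated by the chains `a_{i,j}`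
together with the identity map. -/
def RSec {n s : ℕ} (B : Fin s → List (Fin n)) : Set (IS n) :=
  (Subsemigroup.closure (RGens B ∪ {1}) : Subsemigroup (IS n))

/-- A decomposition of `Fin n` into disjoint nonempty blocks, each block equipped with
a linear order, recorded by listing the elements of each block in increasing order. -/
structure OrderedPartition (n s : ℕ) where
  B : Fin s → List (Fin n)
  nonempty : ∀ i, B i ≠ []
  nodup : ∀ i, (B i).Nodup
  disjoint : ∀ i j, i ≠ j → ∀ x, x ∈ B i → x ∉ B j
  cover : ∀ x, ∃ i, x ∈ B i

/-- The chain `a_{i,j}` of the block listed by `L`, viewed inside `IS(M_i)`, i.e. embedded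
into `IS n` as a partial bijection whose domain is contained in the block: it is defined on
`L` minus `L[j]`, sends `L[l] ↦ L[l+1]` for `l < j` and fixes the other points of `L`. -/
def chainFunB {n : ℕ} (L : List (Fin n)) (j : ℕ) (x : Fin n) : Option (Fin n) :=
  if x ∈ L then
    if L.idxOf x = j then none
    else if L.idxOf x < j then L[L.idxOf x + 1]?
    else some x
  else none

/-- The generators of `R(M⃗)` inside `IS(M)` (embedded in `IS n`), `M` listed by `L`. -/
def BlockGens {n : ℕ} (L : List (Fin n)) : Set (IS n) :=
  {a : IS n | ∃ j : ℕ, j < L.length ∧ ∀ x, a x = chainFunB L j x}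

/-- The identity of `IS(M)` (embedded in `IS n`): the identity map of the block listed by `L`. -/
def idOn {n : ℕ} (L : List (Fin n)) : Set (IS n) :=
  {a : IS n | ∀ x, a x = if x ∈ L then some x else none}

/-- The R-cross-section `R(M⃗)` of `IS(M)`, embedded into `IS n`, for the block listed by `L`. -/
def RSecBlock {n : ℕ} (L : List (Fin n)) : Set (IS n) :=
  (Subsemigroup.closure (BlockGens L ∪ idOn L) : Subsemigroup (IS n))

/-- The wreath product `R_i ≀_p R(M⃗_i)` where `R(M⃗_i) ⊆ IS(M_i)`, `M_i` listed by `L`,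
and `R_i = T ⊆ IS m`, realized inside `PW m n` via the natural embedding
`IS m ≀_p IS(M_i) ⊆ IS m ≀_p IS n`. -/
def WBlock (m n : ℕ) (L : List (Fin n)) (T : Set (IS m)) : Set (PW m n) :=
  {u : PW m n | u.base ∈ RSecBlock L ∧ ∀ x f, u.fib x = some f → f ∈ T}

/-- The element `e' = (0̄, 1)` of `IS m ≀_p IS n`: the second component is the identity of
`IS n` and the first component sends every point to the empty map `0` of `IS m`. -/
def ezero (m n : ℕ) : PW m n where
  base := 1
  fib := fun _ => some ⊥
  dom_eq := by intro x; simp; rfl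


/-! ### Basic lemmas about `IS` and `PW` -/

lemma IS.mul_apply {n : ℕ} (a b : IS n) (x : Fin n) : (a * b) x = (a x).bind b := rfl

lemma IS.mul_assoc' {n : ℕ} (a b c : IS n) : a * b * c = a * (b * c) :=
  PEquiv.trans_assoc a b c

/-- Build a partial bijection from an injective partial function. -/
def mk' {n : ℕ} (f : Fin n → Option (Fin n))
    (hf : ∀ x x' y, f x = some y → f x' = some y → x = x') : IS n where
  toFun := f
  invFun := fun y => if h : ∃ x, f x = some y then some h.choose else none
  inv := by
    intro a b
    constructor
    · intro h
      split at h
      · rename_i hex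
        cases h
        exact hex.choose_spec
      · cases h
    · intro h
      have hex : ∃ x, f x = some b := ⟨a, h⟩
      rw [dif_pos hex]
      exact congrArg some (hf _ _ _ hex.choose_spec h)

@[simp] lemma mk'_apply {n : ℕ} (f : Fin n → Option (Fin n)) (hf) (x : Fin n) :
    (mk' f hf) x = f x := rfl

lemma symm_some {n : ℕ} (a : IS n) {x y : Fin n} : a.symm y = some x ↔ a x = some y := by
  constructor <;> intro h
  · exact Option.mem_def.mp ((PEquiv.mem_iff_mem a).mp (Option.mem_def.mpr h))
  · exact Option.mem_def.mp ((PEquiv.mem_iff_mem a).mpr (Option.mem_def.mpr h))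

lemma pdom_mul_subset {n : ℕ} (a b : IS n) : pdom (a * b) ⊆ pdom a := by
  intro x hx
  simp only [pdom, Set.mem_setOf_eq, IS.mul_apply] at *
  cases h : a x with
  | none => rw [h] at hx; simp at hx
  | some y => simp

lemma trans_symm_trans {n : ℕ} (a b : IS n) (h : pdom a = pdom b) :
    a * (a.symm.trans b) = b := by
  apply PEquiv.ext; intro x
  rw [IS.mul_apply]
  by_cases hx : x ∈ pdom a
  · obtain ⟨y, hy⟩ := Option.isSome_iff_exists.mp hx
    have hsy : a.symm y = some x := (symm_some a).mpr hy
    rw [hy]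
    show (a.symm y).bind b = b x
    rw [hsy]
    rfl
  · have h1 : a x = none := Option.not_isSome_iff_eq_none.mp hx
    have hx' : x ∉ pdom b := h ▸ hx
    have h2 : b x = none := Option.not_isSome_iff_eq_none.mp hx'
    rw [h1, h2]
    rfl

lemma greenR_IS_iff {n : ℕ} (a b : IS n) : GreenR a b ↔ pdom a = pdom b := by
  constructor
  · intro h
    have hb : b ∈ {w | ∃ s, w = b * s} := ⟨b.symm.trans b, (trans_symm_trans b b rfl).symm⟩
    rw [show {w | ∃ s, w = b * s} = {w | ∃ s, w = a * s} from h.symm] at hb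
    obtain ⟨s, hs⟩ := hb
    have ha : a ∈ {w | ∃ s, w = a * s} := ⟨a.symm.trans a, (trans_symm_trans a a rfl).symm⟩
    rw [show {w | ∃ s, w = a * s} = {w | ∃ s, w = b * s} from h] at ha
    obtain ⟨s', hs'⟩ := ha
    apply Set.Subset.antisymm
    · rw [hs']; exact pdom_mul_subset _ _
    · rw [hs]; exact pdom_mul_subset _ _
  · intro h
    unfold GreenR
    ext w
    simp only [Set.mem_setOf_eq]
    constructor
    · rintro ⟨s, rfl⟩
      exact ⟨b.symm.trans a * s, by rw [← IS.mul_assoc', trans_symm_trans b a h.symm]⟩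
    · rintro ⟨s, rfl⟩
      exact ⟨a.symm.trans b * s, by rw [← IS.mul_assoc', trans_symm_trans a b h]⟩

/-! ### PW lemmas -/

lemma PW.ext' {m n : ℕ} {u v : PW m n} (h1 : u.base = v.base) (h2 : u.fib = v.fib) : u = v := by
  cases u; cases v; cases h1; cases h2; rfl

lemma PW.mul_base {m n : ℕ} (u v : PW m n) : (u * v).base = u.base * v.base := rfl

lemma PW.mul_fib {m n : ℕ} (u v : PW m n) (x : Fin n) :
    (u * v).fib x = Option.map₂ (· * ·) (u.fib x) ((u.base x).bind v.fib) := rfl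

lemma PW.mul_fib' {m n : ℕ} (u v : PW m n) :
    (u * v).fib = fun x => Option.map₂ (· * ·) (u.fib x) ((u.base x).bind v.fib) := rfl

lemma PW.fib_none {m n : ℕ} (u : PW m n) (x : Fin n) : u.fib x = none ↔ u.base x = none := by
  rw [← Option.not_isSome_iff_eq_none, ← Option.not_isSome_iff_eq_none, u.dom_eq x]

lemma PW.mul_assoc' {m n : ℕ} (u v w : PW m n) : u * v * w = u * (v * w) := by
  apply PW.ext'
  · exact PEquiv.trans_assoc _ _ _
  · funext x
    simp only [PW.mul_fib, PW.mul_fib', PW.mul_base, IS.mul_apply]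
    cases hu : u.base x with
    | none =>
      have h1 := (PW.fib_none u x).mpr hu
      simp [h1, Option.map₂]
    | some y =>
      have hf : (u.fib x).isSome := (u.dom_eq x).mpr (by simp [hu])
      obtain ⟨f, hf⟩ := Option.isSome_iff_exists.mp hf
      cases hv : v.base y with
      | none =>
        have h2 := (PW.fib_none v y).mpr hv
        simp [h2, hu, hv, hf, Option.map₂]
      | some z =>
        have hg : (v.fib y).isSome := (v.dom_eq y).mpr (by simp [hv])
        obtain ⟨g, hg⟩ := Option.isSome_iff_exists.mp hg
        cases hw : w.fib z with
        | none => simp [hu, hv, hw, hf, hg, Option.map₂]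
        | some h => simp [hu, hv, hw, hf, hg, Option.map₂, IS.mul_assoc']

/-! ### Green's R on `PW` -/

/-- The connecting element `u⁻¹ * v`. -/
def conn {m n : ℕ} (u v : PW m n) : PW m n where
  base := u.base.symm.trans v.base
  fib := fun y => (u.base.symm y).bind
    (fun x => Option.map₂ (fun f g => f.symm.trans g) (u.fib x) (v.fib x))
  dom_eq := by
    intro y
    show _ ↔ ((u.base.symm y).bind v.base).isSome
    cases h : u.base.symm y with
    | none => simp [h]
    | some x =>
      have hx : u.base x = some y := (symm_some u.base).mp h
      have hf : (u.fib x).isSome := (u.dom_eq x).mpr (by simp [hx])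
      obtain ⟨f, hf⟩ := Option.isSome_iff_exists.mp hf
      cases hg : v.fib x with
      | none =>
        have h2 : v.base x = none := (v.fib_none x).mp hg
        simp [h, hf, hg, h2, Option.map₂]
      | some g =>
        have h2 : (v.base x).isSome := (v.dom_eq x).mp (by simp [hg])
        simp [h, hf, hg, Option.map₂, h2]

lemma conn_spec {m n : ℕ} (u v : PW m n) (hb : pdom u.base = pdom v.base)
    (hf : ∀ x f g, u.fib x = some f → v.fib x = some g → pdom f = pdom g) :
    u * conn u v = v := by
  apply PW.ext'
  · exact trans_symm_trans _ _ hb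
  · funext x
    rw [PW.mul_fib]
    cases hux : u.base x with
    | none =>
      have h1 : u.fib x = none := (u.fib_none x).mpr hux
      have h2 : v.fib x = none := (v.fib_none x).mpr (by
        have h3 : x ∉ pdom u.base := by simp [pdom, hux]
        rw [hb] at h3
        exact Option.not_isSome_iff_eq_none.mp h3)
      simp [h1, h2, Option.map₂]
    | some y =>
      have hsymm : u.base.symm y = some x := (symm_some u.base).mpr hux
      have hf1 : (u.fib x).isSome := (u.dom_eq x).mpr (by simp [hux])
      obtain ⟨f, hfx⟩ := Option.isSome_iff_exists.mp hf1
      have hv1 : (v.fib x).isSome := (v.dom_eq x).mpr (by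
        have h3 : x ∈ pdom u.base := by simp [pdom, hux]
        rw [hb] at h3; exact h3)
      obtain ⟨g, hgx⟩ := Option.isSome_iff_exists.mp hv1
      have key : f * (f.symm.trans g) = g := trans_symm_trans f g (hf x f g hfx hgx)
      simp [conn, hux, hsymm, hfx, hgx, Option.map₂, key]

lemma mul_fib_eq_some {m n : ℕ} (u s : PW m n) (x : Fin n) (g : IS m)
    (h : (u * s).fib x = some g) : ∃ f h', u.fib x = some f ∧ g = f * h' := by
  rw [PW.mul_fib] at h
  cases h1 : u.fib x with
  | none => rw [h1] at h; simp [Option.map₂] at h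
  | some f =>
    rw [h1] at h
    cases h2 : (u.base x).bind s.fib with
    | none => rw [h2] at h; simp [Option.map₂] at h
    | some h' =>
      rw [h2] at h
      simp [Option.map₂] at h
      exact ⟨f, h', rfl, h.symm⟩

lemma greenR_PW_iff {m n : ℕ} (u v : PW m n) :
    GreenR u v ↔ (pdom u.base = pdom v.base ∧
      ∀ x f g, u.fib x = some f → v.fib x = some g → pdom f = pdom g) := by
  constructor
  · intro h
    have hveq : v * conn v v = v :=
      conn_spec v v rfl (fun x f g h1 h2 => by rw [h1] at h2; cases h2; rfl)
    have hv : v ∈ {w | ∃ s, w = v * s} := ⟨conn v v, hveq.symm⟩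
    rw [show {w | ∃ s, w = v * s} = {w | ∃ s, w = u * s} from h.symm] at hv
    obtain ⟨s, hs⟩ := hv
    have hueq : u * conn u u = u :=
      conn_spec u u rfl (fun x f g h1 h2 => by rw [h1] at h2; cases h2; rfl)
    have hu : u ∈ {w | ∃ s, w = u * s} := ⟨conn u u, hueq.symm⟩
    rw [show {w | ∃ s, w = u * s} = {w | ∃ s, w = v * s} from h] at hu
    obtain ⟨s', hs'⟩ := hu
    constructor
    · apply Set.Subset.antisymm
      · intro x hx
        rw [hs', PW.mul_base] at hx
        exact pdom_mul_subset _ _ hx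
      · intro x hx
        rw [hs, PW.mul_base] at hx
        exact pdom_mul_subset _ _ hx
    · intro x f g hfx hgx
      apply Set.Subset.antisymm
      · -- u = v * s' : f = g * h'
        rw [hs'] at hfx
        obtain ⟨g', h', hg', hfh⟩ := mul_fib_eq_some v s' x f hfx
        rw [hgx] at hg'; cases hg'
        rw [hfh]
        exact pdom_mul_subset _ _
      · rw [hs] at hgx
        obtain ⟨f', h', hf', hgh⟩ := mul_fib_eq_some u s x g hgx
        rw [hfx] at hf'; cases hf'
        rw [hgh]
        exact pdom_mul_subset _ _
  · rintro ⟨hb, hf⟩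
    have h1 : u * conn u v = v := conn_spec u v hb hf
    have h2 : v * conn v u = u :=
      conn_spec v u hb.symm (fun x f g hfx hgx => (hf x g f hgx hfx).symm)
    unfold GreenR
    ext w
    simp only [Set.mem_setOf_eq]
    constructor
    · rintro ⟨s, rfl⟩
      exact ⟨conn v u * s, by rw [← PW.mul_assoc', h2]⟩
    · rintro ⟨s, rfl⟩
      exact ⟨conn u v * s, by rw [← PW.mul_assoc', h1]⟩

/-! ### Positional combinatorics of block cross-sections -/

/-- Number of positions `< t` not removed by `S`. -/
def rnk (S : Finset ℕ) (t : ℕ) : ℕ := ((Finset.range t).filter (· ∉ S)).card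

/-- The shift function of the canonical element `α_S`. -/
def posFun (S : Finset ℕ) (t : ℕ) : ℕ := S.card + rnk S t

lemma posFun_lt {S : Finset ℕ} {p t : ℕ} (hS : ∀ s ∈ S, s < p) (ht : t < p) (htS : t ∉ S) :
    posFun S t < p := by
  have hd : Disjoint S ((Finset.range t).filter (· ∉ S)) := by
    rw [Finset.disjoint_left]
    intro s hs hmem
    exact (Finset.mem_filter.mp hmem).2 hs
  have h1 : S ∪ (Finset.range t).filter (· ∉ S) ⊆ (Finset.range p).erase t := by
    intro u hu
    rcases Finset.mem_union.mp hu with h | h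
    · exact Finset.mem_erase.mpr ⟨fun e => htS (e ▸ h), Finset.mem_range.mpr (hS u h)⟩
    · obtain ⟨hr, _⟩ := Finset.mem_filter.mp h
      have hut := Finset.mem_range.mp hr
      exact Finset.mem_erase.mpr ⟨Nat.ne_of_lt hut, Finset.mem_range.mpr (lt_trans hut ht)⟩
  have h2 : (S ∪ (Finset.range t).filter (· ∉ S)).card ≤ p - 1 := by
    have := Finset.card_le_card h1
    rwa [Finset.card_erase_of_mem (Finset.mem_range.mpr ht), Finset.card_range] at this
  rw [Finset.card_union_of_disjoint hd] at h2
  unfold posFun rnk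
  omega

lemma rnk_lt_rnk {S : Finset ℕ} {t1 t2 : ℕ} (h : t1 < t2) (h1 : t1 ∉ S) :
    rnk S t1 < rnk S t2 := by
  apply Finset.card_lt_card
  apply (Finset.ssubset_iff_of_subset
    (Finset.filter_subset_filter _ (Finset.range_subset_range.mpr h.le))).mpr
  exact ⟨t1, Finset.mem_filter.mpr ⟨Finset.mem_range.mpr h, h1⟩,
    fun hmem => by simp at hmem⟩

lemma posFun_strictMono {S : Finset ℕ} {t1 t2 : ℕ} (h : t1 < t2) (h1 : t1 ∉ S) :
    posFun S t1 < posFun S t2 := by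
  unfold posFun
  exact Nat.add_lt_add_left (rnk_lt_rnk h h1) _

lemma posFun_inj {S : Finset ℕ} {t1 t2 : ℕ} (h1 : t1 ∉ S) (h2 : t2 ∉ S)
    (h : posFun S t1 = posFun S t2) : t1 = t2 := by
  rcases lt_trichotomy t1 t2 with hlt | heq | hgt
  · exact absurd h (Nat.ne_of_lt (posFun_strictMono hlt h1))
  · exact heq
  · exact absurd h.symm (Nat.ne_of_lt (posFun_strictMono hgt h2))

lemma posFun_ge (S : Finset ℕ) (t : ℕ) : S.card ≤ posFun S t := Nat.le_add_right _ _

lemma posFun_surj {S : Finset ℕ} {p r : ℕ} (hS : ∀ s ∈ S, s < p) (h1 : S.card ≤ r)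
    (h2 : r < p) : ∃ t, t < p ∧ t ∉ S ∧ posFun S t = r := by
  classical
  set C := (Finset.range p).filter (· ∉ S) with hC
  have hCcard : C.card = p - S.card := by
    have hCeq : C = Finset.range p \ S := by
      ext u; simp [hC, Finset.mem_sdiff]
    rw [hCeq, Finset.card_sdiff_of_subset (fun s hs => Finset.mem_range.mpr (hS s hs)), Finset.card_range]
  have hinj : Set.InjOn (rnk S) ↑C := by
    intro t1 ht1 t2 ht2 he
    have h1' : t1 ∉ S := (Finset.mem_filter.mp ht1).2
    have h2' : t2 ∉ S := (Finset.mem_filter.mp ht2).2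
    rcases lt_trichotomy t1 t2 with hlt | heq | hgt
    · exact absurd he (Nat.ne_of_lt (rnk_lt_rnk hlt h1'))
    · exact heq
    · exact absurd he.symm (Nat.ne_of_lt (rnk_lt_rnk hgt h2'))
  have himg : C.image (rnk S) = Finset.range (p - S.card) := by
    apply Finset.eq_of_subset_of_card_le
    · intro r' hr'
      obtain ⟨t, htC, rfl⟩ := Finset.mem_image.mp hr'
      have htp : t < p := Finset.mem_range.mp (Finset.mem_filter.mp htC).1
      have htS : t ∉ S := (Finset.mem_filter.mp htC).2
      have := posFun_lt hS htp htS
      unfold posFun at this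
      exact Finset.mem_range.mpr (by omega)
    · rw [Finset.card_range, Finset.card_image_of_injOn hinj, hCcard]
  have hr : r - S.card ∈ C.image (rnk S) := by
    rw [himg]; exact Finset.mem_range.mpr (by omega)
  obtain ⟨t, htC, hrt⟩ := Finset.mem_image.mp hr
  have htp : t < p := Finset.mem_range.mp (Finset.mem_filter.mp htC).1
  have htS : t ∉ S := (Finset.mem_filter.mp htC).2
  exact ⟨t, htp, htS, by unfold posFun; omega⟩

lemma posFun_comp {S S' : Finset ℕ} {p t : ℕ} (hS : ∀ s ∈ S, s < p) (hS' : ∀ s ∈ S', s < p)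
    (ht : t < p) (htS : t ∉ S) (hq : posFun S t ∉ S') :
    posFun (S ∪ (Finset.range p).filter (fun u => u ∉ S ∧ posFun S u ∈ S')) t
      = posFun S' (posFun S t) := by
  classical
  set E := (Finset.range p).filter (fun u => u ∉ S ∧ posFun S u ∈ S') with hE
  set q := posFun S t with hqdef
  -- (1) |S ∪ E| = |S| + |E|
  have hdisj : Disjoint S E := by
    rw [Finset.disjoint_left]
    intro s hs hmem
    exact (Finset.mem_filter.mp hmem).2.1 hs
  have h1 : (S ∪ E).card = S.card + E.card := Finset.card_union_of_disjoint hdisj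
  -- (2) rnk S t = rnk (S ∪ E) t + |{u < t : u ∈ E}|
  have h2 : rnk S t = rnk (S ∪ E) t + ((Finset.range t).filter (· ∈ E)).card := by
    unfold rnk
    rw [← Finset.card_union_of_disjoint (by
      rw [Finset.disjoint_left]
      intro u hu hmem
      exact (Finset.mem_filter.mp hu).2 (Finset.mem_union_right _ (Finset.mem_filter.mp hmem).2))]
    congr 1
    ext u
    simp only [Finset.mem_filter, Finset.mem_union, Finset.mem_range]
    constructor
    · rintro ⟨hu, huS⟩
      by_cases huE : u ∈ E
      · exact Or.inr ⟨hu, huE⟩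
      · exact Or.inl ⟨hu, fun hmem => by
          rcases Finset.mem_union.mp (by exact Finset.mem_union.mpr hmem) with h | h
          · exact huS h
          · exact huE h⟩
    · rintro (⟨hu, hnot⟩ | ⟨hu, huE⟩)
      · exact ⟨hu, fun hs => hnot (Or.inl hs)⟩
      · exact ⟨hu, (Finset.mem_filter.mp huE).2.1⟩
  -- (3') |E| = |{u < t : u ∈ E}| + |{u ∈ E : t ≤ u}|
  have h3 : E.card = ((Finset.range t).filter (· ∈ E)).card + (E.filter (t ≤ ·)).card := by
    rw [← Finset.card_filter_add_card_filter_not (s := E) (p := (· < t))]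
    congr 1
    · apply Finset.card_nbij id (fun a ha => ?_) (fun a _ b _ h => h) (fun a ha => ?_)
      · obtain ⟨haE, halt⟩ := Finset.mem_filter.mp ha
        exact Finset.mem_filter.mpr ⟨Finset.mem_range.mpr halt, haE⟩
      · obtain ⟨har, haE⟩ := Finset.mem_filter.mp ha
        exact ⟨a, Finset.mem_filter.mpr ⟨haE, Finset.mem_range.mp har⟩, rfl⟩
    · congr 1
      ext u
      simp [not_lt]
  -- (4) posFun S' q = q + |{w ∈ S' : q ≤ w}|
  have h4 : posFun S' q = q + (S'.filter (q ≤ ·)).card := by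
    unfold posFun rnk
    have hA : (S'.filter (· < q)).card + (S'.filter (fun w => ¬ w < q)).card = S'.card :=
      Finset.card_filter_add_card_filter_not _
    have hB : ((Finset.range q).filter (· ∈ S')).card + ((Finset.range q).filter (· ∉ S')).card
        = q := by
      have := Finset.card_filter_add_card_filter_not (s := Finset.range q) (p := (· ∈ S'))
      simpa using this
    have hC : (S'.filter (· < q)).card = ((Finset.range q).filter (· ∈ S')).card := by
      congr 1
      ext u
      simp only [Finset.mem_filter, Finset.mem_range]
      tauto
    have hD : (S'.filter (fun w => ¬ w < q)).card = (S'.filter (q ≤ ·)).card := by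
      congr 1
      ext u
      simp [not_lt]
    omega
  -- (5) |{u ∈ E : t ≤ u}| = |{w ∈ S' : q ≤ w}|
  have h5 : (E.filter (t ≤ ·)).card = (S'.filter (q ≤ ·)).card := by
    apply Finset.card_nbij (posFun S)
    · intro u hu
      obtain ⟨huE, htu⟩ := Finset.mem_filter.mp hu
      obtain ⟨hup, huS, huS'⟩ : u < p ∧ u ∉ S ∧ posFun S u ∈ S' := by
        obtain ⟨h1', h2'⟩ := Finset.mem_filter.mp huE
        exact ⟨Finset.mem_range.mp h1', h2'.1, h2'.2⟩
      refine Finset.mem_filter.mpr ⟨huS', ?_⟩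
      rcases eq_or_lt_of_le htu with heq | hlt
      · exact heq ▸ le_of_eq hqdef
      · exact le_of_lt (posFun_strictMono hlt htS)
    · intro u1 hu1 u2 hu2 he
      simp only [Finset.coe_filter, Set.mem_setOf_eq] at hu1 hu2
      have e1 : u1 ∉ S := (Finset.mem_filter.mp hu1.1).2.1
      have e2 : u2 ∉ S := (Finset.mem_filter.mp hu2.1).2.1
      exact posFun_inj e1 e2 he
    · intro w hw
      simp only [Finset.coe_filter, Set.mem_setOf_eq] at hw
      obtain ⟨hwS', hqw⟩ := hw
      have hwp : w < p := hS' w hwS'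
      have hwge : S.card ≤ w := le_trans (posFun_ge S t) hqw
      obtain ⟨u, hup, huS, hpu⟩ := posFun_surj hS hwge hwp
      have htu : t ≤ u := by
        by_contra hcon
        push_neg at hcon
        have := posFun_strictMono hcon huS
        omega
      refine ⟨u, ?_, hpu⟩
      simp only [Finset.coe_filter, Set.mem_setOf_eq]
      exact ⟨Finset.mem_filter.mpr ⟨Finset.mem_range.mpr hup, huS, hpu ▸ hwS'⟩, htu⟩
  -- combine
  have hmain : posFun (S ∪ E) t = q + (E.filter (t ≤ ·)).card := by
    unfold posFun at *
    omega
  rw [hmain, h5, ← h4]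

/-! ### The canonical elements `α_S` of a block cross-section -/

/-- The canonical partial map with removed position set `S`, on the block listed by `L`. -/
def alphaFun {n : ℕ} (L : List (Fin n)) (S : Finset ℕ) (x : Fin n) : Option (Fin n) :=
  if x ∈ L then (if L.idxOf x ∈ S then none else L[posFun S (L.idxOf x)]?) else none

lemma alphaFun_eq_some {n : ℕ} {L : List (Fin n)} {S : Finset ℕ} {x y : Fin n}
    (h : alphaFun L S x = some y) :
    x ∈ L ∧ L.idxOf x ∉ S ∧ L[posFun S (L.idxOf x)]? = some y := by
  unfold alphaFun at h
  split at h
  · split at h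
    · cases h
    · exact ⟨by assumption, by assumption, h⟩
  · cases h

lemma alphaFun_isSome {n : ℕ} {L : List (Fin n)} {S : Finset ℕ}
    (hS : ∀ s ∈ S, s < L.length) (x : Fin n) :
    (alphaFun L S x).isSome ↔ (x ∈ L ∧ L.idxOf x ∉ S) := by
  constructor
  · intro h
    obtain ⟨y, hy⟩ := Option.isSome_iff_exists.mp h
    obtain ⟨h1, h2, _⟩ := alphaFun_eq_some hy
    exact ⟨h1, h2⟩
  · rintro ⟨hxL, hxS⟩
    have hidx : L.idxOf x < L.length := List.idxOf_lt_length_iff.mpr hxL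
    have hlt : posFun S (L.idxOf x) < L.length := posFun_lt hS hidx hxS
    unfold alphaFun
    rw [if_pos hxL, if_neg hxS, List.getElem?_eq_getElem hlt]
    simp

lemma alphaFun_mem {n : ℕ} {L : List (Fin n)} {S : Finset ℕ} {x y : Fin n}
    (h : alphaFun L S x = some y) : y ∈ L :=
  List.mem_of_getElem? (alphaFun_eq_some h).2.2

lemma alphaFun_none_of_not_mem {n : ℕ} {L : List (Fin n)} {S : Finset ℕ} {x : Fin n}
    (h : x ∉ L) : alphaFun L S x = none := by
  unfold alphaFun
  rw [if_neg h]

lemma alphaFun_inj {n : ℕ} {L : List (Fin n)} (hL : L.Nodup) {S : Finset ℕ}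
    (hS : ∀ s ∈ S, s < L.length) :
    ∀ x x' y, alphaFun L S x = some y → alphaFun L S x' = some y → x = x' := by
  intro x x' y h h'
  obtain ⟨h1, h2, h3⟩ := alphaFun_eq_some h
  obtain ⟨h1', h2', h3'⟩ := alphaFun_eq_some h'
  have hq : posFun S (L.idxOf x) < L.length := posFun_lt hS (List.idxOf_lt_length_iff.mpr h1) h2
  have hq' : posFun S (L.idxOf x') < L.length :=
    posFun_lt hS (List.idxOf_lt_length_iff.mpr h1') h2'
  rw [List.getElem?_eq_getElem hq] at h3
  rw [List.getElem?_eq_getElem hq'] at h3'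
  have hyy : L[posFun S (L.idxOf x)] = L[posFun S (L.idxOf x')] := by
    rw [Option.some_inj.mp h3, Option.some_inj.mp h3']
  have heq : posFun S (L.idxOf x) = posFun S (L.idxOf x') :=
    (hL.getElem_inj_iff (hi := hq) (hj := hq')).mp hyy
  have := posFun_inj h2 h2' heq
  exact (List.idxOf_inj h1).mp this

/-- The canonical element `α_S` as a partial bijection. -/
def alphaEl {n : ℕ} (L : List (Fin n)) (hL : L.Nodup) (S : Finset ℕ)
    (hS : ∀ s ∈ S, s < L.length) : IS n :=
  mk' (alphaFun L S) (alphaFun_inj hL hS)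

/-- Composition of canonical maps. -/
lemma alphaFun_mul {n : ℕ} {L : List (Fin n)} (hL : L.Nodup) {S S' : Finset ℕ}
    (hS : ∀ s ∈ S, s < L.length) (hS' : ∀ s ∈ S', s < L.length) (x : Fin n) :
    (alphaFun L S x).bind (alphaFun L S')
      = alphaFun L
          (S ∪ (Finset.range L.length).filter (fun u => u ∉ S ∧ posFun S u ∈ S')) x := by
  classical
  set S'' := S ∪ (Finset.range L.length).filter (fun u => u ∉ S ∧ posFun S u ∈ S') with hS''
  by_cases hxL : x ∈ L
  · set t := L.idxOf x with htdef
    have htp : t < L.length := List.idxOf_lt_length_iff.mpr hxL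
    by_cases htS : t ∈ S
    · have e1 : alphaFun L S x = none := by
        unfold alphaFun; rw [if_pos hxL, if_pos htS]
      have e2 : alphaFun L S'' x = none := by
        unfold alphaFun
        rw [if_pos hxL, if_pos (Finset.mem_union_left _ htS)]
      rw [e1, e2]; rfl
    · have hq : posFun S t < L.length := posFun_lt hS htp htS
      have e1 : alphaFun L S x = some (L[posFun S t]) := by
        unfold alphaFun
        rw [if_pos hxL, if_neg htS, List.getElem?_eq_getElem hq]
      have hidx2 : L.idxOf (L[posFun S t]) = posFun S t := List.Nodup.idxOf_getElem hL _ hq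
      have hmem2 : L[posFun S t] ∈ L := List.getElem_mem _
      by_cases hqS' : posFun S t ∈ S'
      · have e2 : alphaFun L S' (L[posFun S t]) = none := by
          unfold alphaFun
          rw [if_pos hmem2, hidx2, if_pos hqS']
        have e3 : alphaFun L S'' x = none := by
          unfold alphaFun
          rw [if_pos hxL, if_pos (Finset.mem_union_right _
            (Finset.mem_filter.mpr ⟨Finset.mem_range.mpr htp, htS, hqS'⟩))]
        rw [e1, e3]
        show alphaFun L S' (L[posFun S t]) = none
        exact e2
      · have homp := posFun_comp (p := L.length) hS hS' htp htS hqS'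
        have htS'' : t ∉ S'' := by
          rw [hS'']
          simp only [Finset.mem_union, Finset.mem_filter, Finset.mem_range]
          push_neg
          exact ⟨htS, fun _ _ => hqS'⟩
        have hS''lt : ∀ s ∈ S'', s < L.length := by
          intro s hs
          rcases Finset.mem_union.mp hs with h | h
          · exact hS s h
          · exact Finset.mem_range.mp (Finset.mem_filter.mp h).1
        have hq'' : posFun S'' t < L.length := posFun_lt hS''lt htp htS''
        have e2 : alphaFun L S' (L[posFun S t]) = L[posFun S' (posFun S t)]? := by
          unfold alphaFun
          rw [if_pos hmem2, hidx2, if_neg hqS']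
        have e3 : alphaFun L S'' x = L[posFun S'' t]? := by
          unfold alphaFun
          rw [if_pos hxL, if_neg htS'']
        rw [e1, e3]
        show alphaFun L S' (L[posFun S t]) = _
        rw [e2, ← homp]
  · rw [alphaFun_none_of_not_mem hxL, alphaFun_none_of_not_mem hxL]
    rfl

/-- The chains `a_{i,j}` are the canonical elements for singleton `S`. -/
lemma chainFunB_eq_alpha {n : ℕ} {L : List (Fin n)} (hL : L.Nodup) {j : ℕ}
    (hj : j < L.length) (x : Fin n) : chainFunB L j x = alphaFun L {j} x := by
  unfold chainFunB alphaFun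
  by_cases hxL : x ∈ L
  · rw [if_pos hxL, if_pos hxL]
    set t := L.idxOf x with htdef
    by_cases htj : t = j
    · rw [if_pos htj, if_pos (Finset.mem_singleton.mpr htj)]
    · rw [if_neg htj, if_neg (fun h => htj (Finset.mem_singleton.mp h))]
      have htp : t < L.length := List.idxOf_lt_length_iff.mpr hxL
      by_cases hlt : t < j
      · rw [if_pos hlt]
        have : posFun {j} t = t + 1 := by
          unfold posFun rnk
          have : (Finset.range t).filter (· ∉ ({j} : Finset ℕ)) = Finset.range t := by
            apply Finset.filter_true_of_mem
            intro u hu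
            have := Finset.mem_range.mp hu
            simp only [Finset.mem_singleton]
            omega
          rw [this, Finset.card_singleton, Finset.card_range]
          omega
        rw [this]
      · rw [if_neg hlt]
        have hgt : j < t := by omega
        have : posFun {j} t = t := by
          unfold posFun rnk
          have : (Finset.range t).filter (· ∉ ({j} : Finset ℕ)) = (Finset.range t).erase j := by
            ext u
            simp only [Finset.mem_filter, Finset.mem_erase, Finset.mem_range,
              Finset.mem_singleton]
            tauto
          rw [this, Finset.card_erase_of_mem (Finset.mem_range.mpr hgt), Finset.card_singleton,
            Finset.card_range]
          omega
        rw [this, List.getElem?_eq_getElem htp, List.getElem_idxOf htp]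
  · rw [if_neg hxL, if_neg hxL]

/-! ### Structure of `RSecBlock` -/

lemma bind_congr' {α β : Type*} {o : Option α} {f g : α → Option β}
    (h : ∀ a, f a = g a) : o.bind f = o.bind g := by
  cases o <;> simp [h]

lemma alphaFun_empty {n : ℕ} (L : List (Fin n)) (x : Fin n) :
    alphaFun L ∅ x = if x ∈ L then some x else none := by
  unfold alphaFun
  by_cases hxL : x ∈ L
  · have htp : L.idxOf x < L.length := List.idxOf_lt_length_iff.mpr hxL
    have hpos : posFun ∅ (L.idxOf x) = L.idxOf x := by
      unfold posFun rnk
      simp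
    rw [if_pos hxL, if_pos hxL, if_neg (Finset.notMem_empty _), hpos,
      List.getElem?_eq_getElem htp, List.getElem_idxOf htp]
  · rw [if_neg hxL, if_neg hxL]

/-- Every element of `RSecBlock L` is a canonical element `α_S`. -/
lemma rsecBlock_alpha {n : ℕ} {L : List (Fin n)} (hL : L.Nodup) {a : IS n}
    (ha : a ∈ RSecBlock L) :
    ∃ S : Finset ℕ, (∀ s ∈ S, s < L.length) ∧ ∀ x, a x = alphaFun L S x := by
  induction ha using Subsemigroup.closure_induction with
  | mem b hb =>
    rcases hb with hb | hb
    · obtain ⟨j, hj, hfun⟩ := hb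
      refine ⟨{j}, by simp [hj], fun x => ?_⟩
      rw [hfun x, chainFunB_eq_alpha hL hj]
    · refine ⟨∅, by simp, fun x => ?_⟩
      rw [hb x, alphaFun_empty]
  | mul b c hb hc ihb ihc =>
    obtain ⟨S, hS, hfS⟩ := ihb
    obtain ⟨S', hS', hfS'⟩ := ihc
    refine ⟨S ∪ (Finset.range L.length).filter (fun u => u ∉ S ∧ posFun S u ∈ S'), ?_, ?_⟩
    · intro s hs
      rcases Finset.mem_union.mp hs with h | h
      · exact hS s h
      · exact Finset.mem_range.mp (Finset.mem_filter.mp h).1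
    · intro x
      rw [IS.mul_apply, hfS x, bind_congr' hfS', alphaFun_mul hL hS hS']

/-- Every canonical element `α_S` lies in `RSecBlock L`. -/
lemma alpha_mem_rsecBlock {n : ℕ} {L : List (Fin n)} (hL : L.Nodup) :
    ∀ (N : ℕ) (S : Finset ℕ), S.card = N → (∀ s ∈ S, s < L.length) →
      ∃ a, a ∈ RSecBlock L ∧ ∀ x, a x = alphaFun L S x := by
  intro N
  induction N using Nat.strong_induction_on with
  | _ N ih =>
    intro S hcard hS
    rcases S.eq_empty_or_nonempty with rfl | hne
    · refine ⟨alphaEl L hL ∅ (by simp), ?_, fun x => rfl⟩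
      apply Subsemigroup.subset_closure
      right
      intro x
      show alphaFun L ∅ x = _
      rw [alphaFun_empty]
    · set s0 := S.min' hne with hs0def
      set A := S.erase s0 with hAdef
      have hA : ∀ s ∈ A, s < L.length := fun s hs => hS s (Finset.mem_of_mem_erase hs)
      have hs0S : s0 ∈ S := S.min'_mem hne
      have hs0p : s0 < L.length := hS _ hs0S
      have hs0A : s0 ∉ A := Finset.notMem_erase _ _
      have hAcard : A.card < N := hcard ▸ Finset.card_erase_lt_of_mem hs0S
      obtain ⟨aA, haA, hfA⟩ := ih _ hAcard A rfl hA
      set j := posFun A s0 with hjdef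
      have hj : j < L.length := posFun_lt hA hs0p hs0A
      have hjS : ∀ s ∈ ({j} : Finset ℕ), s < L.length := by simp [hj]
      have hset : A ∪ (Finset.range L.length).filter
          (fun u => u ∉ A ∧ posFun A u ∈ ({j} : Finset ℕ)) = S := by
        ext u
        simp only [Finset.mem_union, Finset.mem_filter, Finset.mem_range, Finset.mem_singleton]
        constructor
        · rintro (h | ⟨hup, huA, hpu⟩)
          · exact Finset.mem_of_mem_erase h
          · have : u = s0 := posFun_inj huA hs0A (by rw [hpu])
            exact this ▸ hs0S
        · intro huS
          by_cases hu : u = s0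
          · exact Or.inr ⟨hu ▸ hs0p, hu ▸ hs0A, by rw [hu]⟩
          · exact Or.inl (Finset.mem_erase.mpr ⟨hu, huS⟩)
      refine ⟨aA * alphaEl L hL {j} hjS, Subsemigroup.mul_mem _ haA ?_, fun x => ?_⟩
      · apply Subsemigroup.subset_closure
        left
        exact ⟨j, hj, fun x => (chainFunB_eq_alpha hL hj x).symm⟩
      · rw [IS.mul_apply, hfA x]
        have hbind : (alphaFun L A x).bind (alphaEl L hL {j} hjS)
            = (alphaFun L A x).bind (alphaFun L {j}) := bind_congr' (fun a => rfl)
        rw [hbind, alphaFun_mul hL hA hjS, hset]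

/-- Two canonical elements with the same domain are equal. -/
lemma alpha_S_unique {n : ℕ} {L : List (Fin n)} (hL : L.Nodup) {S S' : Finset ℕ}
    (hS : ∀ s ∈ S, s < L.length) (hS' : ∀ s ∈ S', s < L.length)
    (h : ∀ x, (alphaFun L S x).isSome ↔ (alphaFun L S' x).isSome) : S = S' := by
  ext j
  by_cases hj : j < L.length
  · have hx := h (L[j])
    rw [alphaFun_isSome hS, alphaFun_isSome hS'] at hx
    have hmem : L[j] ∈ L := List.getElem_mem _
    have hidx : L.idxOf (L[j]) = j := List.Nodup.idxOf_getElem hL j hj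
    rw [hidx] at hx
    constructor
    · intro hjS
      by_contra hjS'
      exact (hx.mpr ⟨hmem, hjS'⟩).2 hjS
    · intro hjS'
      by_contra hjS
      exact (hx.mp ⟨hmem, hjS⟩).2 hjS'
  · constructor
    · intro h'; exact absurd (hS _ h') hj
    · intro h'; exact absurd (hS' _ h') hj

/-- given an R-cross-section `R(M⃗₁,…,M⃗ₖ)` of `IS n` and R-cross-sections
`R_1,…,R_k` of `IS m`, the image of `∏ᵢ (R_i ≀_p R(M⃗_i))` under `φ_μ` — i.e. the set of
those `(f,a)` obtained by glueing a tuple `((f_i,a_i))_i` blockwise, `a|_{M_i} = a_i`,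
`f|_{M_i} = f_i` — is an R-cross-section of `IS m ≀_p IS n`. -/
theorem wreath_rcross_product (m n k : ℕ) (P : OrderedPartition n k)
    (T : Fin k → Set (IS m)) (hT : ∀ i, IsRCrossSection (T i)) :
    IsRCrossSection
      {u : PW m n | ∃ v : Fin k → PW m n,
        (∀ i, v i ∈ WBlock m n (P.B i) (T i)) ∧
        (∀ i, ∀ x ∈ P.B i, u.base x = (v i).base x ∧ u.fib x = (v i).fib x)} := by
  classical
  -- block selector
  have hblk_mem : ∀ x : Fin n, x ∈ P.B ((P.cover x).choose) := fun x => (P.cover x).choose_spec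
  set blk : Fin n → Fin k := fun x => (P.cover x).choose with hblkdef
  have hblk_eq : ∀ x i, x ∈ P.B i → blk x = i := by
    intro x i hx
    by_contra hne
    exact P.disjoint _ _ hne x (hblk_mem x) hx
  -- values of block cross-section elements stay in the block
  have hblock_val : ∀ i (a : IS n), a ∈ RSecBlock (P.B i) →
      (∀ x, x ∉ P.B i → a x = none) ∧ (∀ x y, a x = some y → y ∈ P.B i) := by
    intro i a ha
    obtain ⟨S, hS, hf⟩ := rsecBlock_alpha (P.nodup i) ha
    exact ⟨fun x hx => by rw [hf x]; exact alphaFun_none_of_not_mem hx,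
           fun x y hxy => alphaFun_mem (hf x ▸ hxy)⟩
  constructor
  · -- closure under multiplication
    rintro u ⟨v, hv, hvm⟩ u' ⟨v', hv', hvm'⟩
    refine ⟨fun i => v i * v' i, fun i => ⟨?_, ?_⟩, fun i x hx => ⟨?_, ?_⟩⟩
    · exact Subsemigroup.mul_mem _ (hv i).1 (hv' i).1
    · intro x f hf
      rw [PW.mul_fib] at hf
      cases h1 : (v i).fib x with
      | none => rw [h1] at hf; simp [Option.map₂] at hf
      | some g =>
        cases h2 : ((v i).base x).bind (v' i).fib with
        | none => rw [h1, h2] at hf; simp [Option.map₂] at hf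
        | some h' =>
          rw [h1, h2] at hf
          simp only [Option.map₂, Option.bind_some, Option.map_some] at hf
          have hg : g ∈ T i := (hv i).2 x g h1
          have hh : h' ∈ T i := by
            cases h3 : (v i).base x with
            | none => rw [h3] at h2; cases h2
            | some y => rw [h3] at h2; exact (hv' i).2 y h' h2
          have : g * h' = f := Option.some_inj.mp hf
          rw [← this]
          exact (hT i).1 g hg h' hh
    · rw [PW.mul_base, PW.mul_base, IS.mul_apply, IS.mul_apply, (hvm i x hx).1]
      cases hy : (v i).base x with
      | none => rfl
      | some y =>
        have hyB : y ∈ P.B i := (hblock_val i _ (hv i).1).2 x y hy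
        simp only [Option.bind_some]
        exact (hvm' i y hyB).1
    · rw [PW.mul_fib, PW.mul_fib, (hvm i x hx).2, (hvm i x hx).1]
      cases hy : (v i).base x with
      | none => rfl
      | some y =>
        have hyB : y ∈ P.B i := (hblock_val i _ (hv i).1).2 x y hy
        simp only [Option.bind_some]
        rw [(hvm' i y hyB).2]
  · -- exactly one element in each R-class
    intro w
    -- the removed-position sets of the blocks
    set Sset : Fin k → Finset ℕ := fun i =>
      (Finset.univ.filter (fun x => x ∈ P.B i ∧ ¬(w.base x).isSome)).image
        (fun x => (P.B i).idxOf x) with hSsetdef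
    have hSlt : ∀ i, ∀ s ∈ Sset i, s < (P.B i).length := by
      intro i s hs
      obtain ⟨x, hx, rfl⟩ := Finset.mem_image.mp hs
      exact List.idxOf_lt_length_iff.mpr (Finset.mem_filter.mp hx).2.1
    have hSmem : ∀ i x, x ∈ P.B i → ((P.B i).idxOf x ∈ Sset i ↔ ¬(w.base x).isSome) := by
      intro i x hx
      constructor
      · intro h
        obtain ⟨x', hx', he⟩ := Finset.mem_image.mp h
        have hx'' := Finset.mem_filter.mp hx'
        have hxx : x' = x := (List.idxOf_inj hx''.2.1).mp he
        exact hxx ▸ hx''.2.2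
      · intro h
        exact Finset.mem_image.mpr ⟨x, Finset.mem_filter.mpr ⟨Finset.mem_univ _, hx, h⟩, rfl⟩
    -- the canonical block bases
    have hai : ∀ i, ∃ a, a ∈ RSecBlock (P.B i) ∧ ∀ x, a x = alphaFun (P.B i) (Sset i) x :=
      fun i => alpha_mem_rsecBlock (P.nodup i) _ (Sset i) rfl (hSlt i)
    set a : Fin k → IS n := fun i => (hai i).choose with hadef
    have ha1 : ∀ i, a i ∈ RSecBlock (P.B i) := fun i => (hai i).choose_spec.1
    have ha2 : ∀ i x, (a i) x = alphaFun (P.B i) (Sset i) x := fun i => (hai i).choose_spec.2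
    have hadom : ∀ i x, x ∈ P.B i → (((a i) x).isSome ↔ (w.base x).isSome) := by
      intro i x hx
      rw [ha2 i x, alphaFun_isSome (hSlt i)]
      constructor
      · rintro ⟨_, hidx⟩
        by_contra h
        exact hidx ((hSmem i x hx).mpr h)
      · intro h
        exact ⟨hx, fun hmem => ((hSmem i x hx).mp hmem) h⟩
    -- the canonical fibers
    set tsel : Fin n → IS m := fun x =>
      if h : ∃ f, w.fib x = some f then ((hT (blk x)).2 h.choose).exists.choose else 1
      with htseldef
    have htsel : ∀ x f, w.fib x = some f → tsel x ∈ T (blk x) ∧ GreenR f (tsel x) := by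
      intro x f hf
      have h : ∃ f', w.fib x = some f' := ⟨f, hf⟩
      have hch : h.choose = f := Option.some_inj.mp (h.choose_spec.symm.trans hf)
      have htx : tsel x = ((hT (blk x)).2 h.choose).exists.choose := by
        rw [htseldef]
        simp only
        rw [dif_pos h]
      rw [htx, ← hch]
      exact ((hT (blk x)).2 h.choose).exists.choose_spec
    -- assemble the blockwise elements and the glued element
    set v : Fin k → PW m n := fun i =>
      { base := a i
        fib := fun x => if ((a i) x).isSome then some (tsel x) else none
        dom_eq := by
          intro x
          by_cases hx : ((a i) x).isSome <;> simp [hx] } with hvdef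
    have hinj : ∀ x x' y, (fun z => (a (blk z)) z) x = some y →
        (fun z => (a (blk z)) z) x' = some y → x = x' := by
      intro x x' y hx hx'
      simp only at hx hx'
      have hyB : y ∈ P.B (blk x) := (hblock_val _ _ (ha1 _)).2 x y hx
      have hyB' : y ∈ P.B (blk x') := (hblock_val _ _ (ha1 _)).2 x' y hx'
      have hbe : blk x = blk x' := by
        by_contra hne
        exact P.disjoint _ _ hne y hyB hyB'
      rw [ha2] at hx hx'
      rw [hbe] at hx
      exact alphaFun_inj (P.nodup (blk x')) (hSlt (blk x')) x x' y hx hx'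
    set u : PW m n :=
      { base := mk' (fun z => (a (blk z)) z) hinj
        fib := fun x => if ((a (blk x)) x).isSome then some (tsel x) else none
        dom_eq := by
          intro x
          show _ ↔ ((a (blk x)) x).isSome
          by_cases hx : ((a (blk x)) x).isSome <;> simp [hx] } with hudef
    have hubase : ∀ x, u.base x = (a (blk x)) x := fun x => rfl
    have hufib : ∀ x, u.fib x = if ((a (blk x)) x).isSome then some (tsel x) else none :=
      fun x => rfl
    have hvbase : ∀ i, (v i).base = a i := fun i => rfl
    have hvfib : ∀ i x, (v i).fib x = if ((a i) x).isSome then some (tsel x) else none :=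
      fun i x => rfl
    -- u belongs to the glued set
    have humem : u ∈ {u : PW m n | ∃ v : Fin k → PW m n,
        (∀ i, v i ∈ WBlock m n (P.B i) (T i)) ∧
        (∀ i, ∀ x ∈ P.B i, u.base x = (v i).base x ∧ u.fib x = (v i).fib x)} := by
      refine ⟨v, fun i => ⟨ha1 i, ?_⟩, fun i x hx => ?_⟩
      · intro x f hf
        rw [hvfib i x] at hf
        by_cases hx : ((a i) x).isSome
        · rw [if_pos hx] at hf
          cases hf
          have hxB : x ∈ P.B i :=
            ((alphaFun_isSome (hSlt i) x).mp (by rw [← ha2 i x]; exact hx)).1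
          have hwx : (w.base x).isSome := (hadom i x hxB).mp hx
          obtain ⟨g, hg⟩ := Option.isSome_iff_exists.mp ((w.dom_eq x).mpr hwx)
          have := (htsel x g hg).1
          rwa [hblk_eq x i hxB] at this
        · rw [if_neg hx] at hf; cases hf
      · constructor
        · rw [hubase x, hvbase i, hblk_eq x i hx]
        · rw [hufib x, hvfib i x, hblk_eq x i hx]
    -- u is R-related to w
    have hgreen : GreenR w u := by
      rw [greenR_PW_iff]
      constructor
      · ext x
        simp only [pdom, Set.mem_setOf_eq]
        rw [hubase x]
        exact (hadom (blk x) x (hblk_mem x)).symm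
      · intro x f g hfx hgx
        rw [hufib x] at hgx
        by_cases hx : ((a (blk x)) x).isSome
        · rw [if_pos hx] at hgx
          cases hgx
          exact (greenR_IS_iff f (tsel x)).mp (htsel x f hfx).2
        · rw [if_neg hx] at hgx; cases hgx
    refine ⟨u, ⟨humem, hgreen⟩, ?_⟩
    -- uniqueness
    rintro t ⟨⟨v', hv', hvm'⟩, hgr⟩
    have hgr' := (greenR_PW_iff w t).mp hgr
    have hdomiff : ∀ z : Fin n, (w.base z).isSome ↔ (t.base z).isSome := by
      intro z
      have := Set.ext_iff.mp hgr'.1 z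
      simpa [pdom] using this
    apply PW.ext'
    · apply PEquiv.ext
      intro x
      obtain ⟨S', hS'lt, hS'f⟩ := rsecBlock_alpha (P.nodup (blk x)) (hv' (blk x)).1
      have hSeq : S' = Sset (blk x) := by
        apply alpha_S_unique (P.nodup (blk x)) hS'lt (hSlt (blk x))
        intro x'
        by_cases hx'B : x' ∈ P.B (blk x)
        · rw [← hS'f x', ← (hvm' (blk x) x' hx'B).1, ← ha2 (blk x) x']
          constructor
          · intro h
            exact (hadom (blk x) x' hx'B).mpr ((hdomiff x').mpr h)
          · intro h
            exact (hdomiff x').mp ((hadom (blk x) x' hx'B).mp h)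
        · rw [alphaFun_none_of_not_mem hx'B, alphaFun_none_of_not_mem hx'B]
      rw [(hvm' (blk x) x (hblk_mem x)).1, hS'f x, hSeq, ← ha2 (blk x) x, hubase x]
    · funext x
      rw [hufib x]
      by_cases hx : ((a (blk x)) x).isSome
      · rw [if_pos hx]
        have hwx : (w.base x).isSome := (hadom (blk x) x (hblk_mem x)).mp hx
        obtain ⟨f, hf⟩ := Option.isSome_iff_exists.mp ((w.dom_eq x).mpr hwx)
        have htxb : (t.base x).isSome := (hdomiff x).mp hwx
        obtain ⟨g, hg⟩ := Option.isSome_iff_exists.mp ((t.dom_eq x).mpr htxb)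
        have hgT : g ∈ T (blk x) := by
          have hvv := (hvm' (blk x) x (hblk_mem x)).2
          exact (hv' (blk x)).2 x g (hvv ▸ hg)
        have hgreen_fg : GreenR f g := (greenR_IS_iff f g).mpr (hgr'.2 x f g hf hg)
        have h1 := htsel x f hf
        have hgeq : g = tsel x := ((hT (blk x)).2 f).unique ⟨hgT, hgreen_fg⟩ ⟨h1.1, h1.2⟩
        rw [hg, hgeq]
      · rw [if_neg hx]
        have hwx : ¬(w.base x).isSome := fun h => hx ((hadom (blk x) x (hblk_mem x)).mpr h)
        have htb : t.base x = none :=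
          Option.not_isSome_iff_eq_none.mp (fun h => hwx ((hdomiff x).mpr h))
        exact (t.fib_none x).mpr htb

end ISW
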